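/- Let u, v ∈ ℂ satisfy v² + uv + v = u³ − u, and suppose u, v, and u+1 are all nonzero. Set x = v + 1, y = u(u+1)/v, z₁ = −u, z₂ = (u+v)/u², z₃ = (v+1)/u², and assume x ≠ 0, y ≠ 0 and zⱼ ∉ {0, 1} for j = 1, 2, 3. Then x ∧ y = z₁ ∧ (1−z₁) + z₂ ∧ (1−z₂) + z₃ ∧ (1−z₃) in (⋀² ℂ*) ⊗ ℚ. -/

import Mathlib

open scoped TensorProduct

/-- The wedge `a ∧ b` of two units of `ℂ`, viewed inside the exterior algebra over `ℤ`
of the multiplicative group `ℂ*` (written additively); the degree-two part of this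
exterior algebra is `⋀² ℂ*`. -/
noncomputable def wedgeUnits (a b : ℂˣ) : ExteriorAlgebra ℤ (Additive ℂˣ) :=
  ExteriorAlgebra.ι ℤ (Additive.ofMul a) * ExteriorAlgebra.ι ℤ (Additive.ofMul b)

/-- `⟨z⟩ := z ∧ (1 − z)` for `z ∈ ℂ`, `z ≠ 0, 1`. -/
noncomputable def wedgeStd (z : ℂ) (h0 : z ≠ 0) (h1 : z ≠ 1) :
    ExteriorAlgebra ℤ (Additive ℂˣ) :=
  wedgeUnits (Units.mk0 z h0) (Units.mk0 (1 - z) (sub_ne_zero_of_ne (Ne.symm h1)))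

lemma wedgeUnits_mul_left (a b c : ℂˣ) :
    wedgeUnits (a * b) c = wedgeUnits a c + wedgeUnits b c := by
  simp [wedgeUnits, ofMul_mul, map_add, add_mul]

lemma wedgeUnits_mul_right (a b c : ℂˣ) :
    wedgeUnits a (b * c) = wedgeUnits a b + wedgeUnits a c := by
  simp [wedgeUnits, ofMul_mul, map_add, mul_add]

lemma wedgeUnits_inv_left (a b : ℂˣ) :
    wedgeUnits a⁻¹ b = -wedgeUnits a b := by
  simp [wedgeUnits, ofMul_inv, map_neg, neg_mul]

lemma wedgeUnits_inv_right (a b : ℂˣ) :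
    wedgeUnits a b⁻¹ = -wedgeUnits a b := by
  simp [wedgeUnits, ofMul_inv, map_neg, mul_neg]

lemma wedgeUnits_self (a : ℂˣ) : wedgeUnits a a = 0 :=
  ExteriorAlgebra.ι_sq_zero _

lemma wedgeUnits_swap (a b : ℂˣ) : wedgeUnits a b = -wedgeUnits b a := by
  have := ExteriorAlgebra.ι_add_mul_swap (R := ℤ) (Additive.ofMul a) (Additive.ofMul b)
  exact eq_neg_of_add_eq_zero_left this

/-- On the elliptic curve `v² + uv + v = u³ − u`, with `x = v + 1`, `y = u(u+1)/v`,
`z₁ = −u`, `z₂ = (u+v)/u²`, `z₃ = (v+1)/u²`, one has the triangulation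
`x ∧ y = ⟨z₁⟩ + ⟨z₂⟩ + ⟨z₃⟩` in `(⋀² ℂ*) ⊗ ℚ`. -/
theorem triangulation_m009 (u v : ℂ)
    (hE : v ^ 2 + u * v + v = u ^ 3 - u)
    (hu : u ≠ 0) (hv : v ≠ 0) (hu1 : u + 1 ≠ 0)
    (hx : v + 1 ≠ 0) (hy : u * (u + 1) / v ≠ 0)
    (hz10 : -u ≠ 0) (hz11 : -u ≠ 1)
    (hz20 : (u + v) / u ^ 2 ≠ 0) (hz21 : (u + v) / u ^ 2 ≠ 1)
    (hz30 : (v + 1) / u ^ 2 ≠ 0) (hz31 : (v + 1) / u ^ 2 ≠ 1) :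
    (wedgeUnits (Units.mk0 (v + 1) hx) (Units.mk0 (u * (u + 1) / v) hy)) ⊗ₜ[ℤ] (1 : ℚ) =
      (wedgeStd (-u) hz10 hz11 +
        wedgeStd ((u + v) / u ^ 2) hz20 hz21 +
        wedgeStd ((v + 1) / u ^ 2) hz30 hz31) ⊗ₜ[ℤ] (1 : ℚ) := by
  have hw : u + v ≠ 0 := by
    intro h
    apply hz20
    rw [h, zero_div]
  -- base units
  set U : ℂˣ := Units.mk0 u hu with hU
  set V : ℂˣ := Units.mk0 v hv with hV
  set P : ℂˣ := Units.mk0 (u + 1) hu1 with hP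
  set W : ℂˣ := Units.mk0 (u + v) hw with hW
  set N : ℂˣ := Units.mk0 (-1 : ℂ) (by norm_num) with hN
  -- decompositions of the entries into products of the base units
  have h1 : Units.mk0 (v + 1) hx = U * U * U * W⁻¹ := by
    apply Units.ext
    simp only [hU, hV, hP, hW, hN, Units.val_mul, Units.val_inv_eq_inv_val, Units.val_mk0]
    field_simp
    linear_combination hE
  have h2 : Units.mk0 (u * (u + 1) / v) hy = U * P * V⁻¹ := by
    apply Units.ext
    simp only [hU, hV, hP, hW, hN, Units.val_mul, Units.val_inv_eq_inv_val, Units.val_mk0]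
    field_simp
  have h3 : Units.mk0 (-u) hz10 = N * U := by
    apply Units.ext
    simp only [hU, hV, hP, hW, hN, Units.val_mul, Units.val_inv_eq_inv_val, Units.val_mk0]
    simp
  have h4 : Units.mk0 (1 - -u) (sub_ne_zero_of_ne (Ne.symm hz11)) = P := by
    apply Units.ext
    simp only [hU, hV, hP, hW, hN, Units.val_mul, Units.val_inv_eq_inv_val, Units.val_mk0]
    simp [hP]
    ring
  have h5 : Units.mk0 ((u + v) / u ^ 2) hz20 = W * U⁻¹ * U⁻¹ := by
    apply Units.ext
    simp only [hU, hV, hP, hW, hN, Units.val_mul, Units.val_inv_eq_inv_val, Units.val_mk0]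
    rw [sq, mul_assoc, ← mul_inv, div_eq_mul_inv]
  have h6 : Units.mk0 (1 - (u + v) / u ^ 2) (sub_ne_zero_of_ne (Ne.symm hz21)) =
      V * V * P⁻¹ * U⁻¹ * U⁻¹ := by
    apply Units.ext
    simp only [hU, hV, hP, hW, hN, Units.val_mul, Units.val_inv_eq_inv_val, Units.val_mk0]
    field_simp
    linear_combination -hE
  have h7 : Units.mk0 ((v + 1) / u ^ 2) hz30 = U * W⁻¹ := by
    apply Units.ext
    simp only [hU, hV, hP, hW, hN, Units.val_mul, Units.val_inv_eq_inv_val, Units.val_mk0]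
    field_simp
    linear_combination hE
  have h8 : Units.mk0 (1 - (v + 1) / u ^ 2) (sub_ne_zero_of_ne (Ne.symm hz31)) = V * W⁻¹ := by
    apply Units.ext
    simp only [hU, hV, hP, hW, hN, Units.val_mul, Units.val_inv_eq_inv_val, Units.val_mk0]
    field_simp
    linear_combination -hE
  have key : wedgeStd (-u) hz10 hz11 + wedgeStd ((u + v) / u ^ 2) hz20 hz21 +
      wedgeStd ((v + 1) / u ^ 2) hz30 hz31 =
      wedgeUnits (Units.mk0 (v + 1) hx) (Units.mk0 (u * (u + 1) / v) hy) + wedgeUnits N P := by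
    unfold wedgeStd
    rw [h1, h2, h3, h4, h5, h6, h7, h8]
    simp only [wedgeUnits_mul_left, wedgeUnits_mul_right, wedgeUnits_inv_left,
      wedgeUnits_inv_right, wedgeUnits_self, neg_neg, neg_add_rev, neg_zero]
    rw [show wedgeUnits U W = -wedgeUnits W U from wedgeUnits_swap U W]
    abel
  rw [key, TensorProduct.add_tmul]
  -- kill the 2-torsion term
  have hNN : N * N = 1 := by
    apply Units.ext
    simp only [hU, hV, hP, hW, hN, Units.val_mul, Units.val_inv_eq_inv_val, Units.val_mk0]
    simp
  have h2t : (2 : ℤ) • wedgeUnits N P = 0 := by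
    have := wedgeUnits_mul_left N N P
    rw [hNN] at this
    have h0 : wedgeUnits 1 P = 0 := by
      simp [wedgeUnits, ofMul_one]
    rw [h0] at this
    rw [two_smul, this]
  have hzero : wedgeUnits N P ⊗ₜ[ℤ] (1 : ℚ) = 0 := by
    calc wedgeUnits N P ⊗ₜ[ℤ] (1 : ℚ)
        = wedgeUnits N P ⊗ₜ[ℤ] ((2 : ℤ) • (2⁻¹ : ℚ)) := by norm_num
      _ = ((2 : ℤ) • wedgeUnits N P) ⊗ₜ[ℤ] (2⁻¹ : ℚ) := by
          rw [TensorProduct.smul_tmul]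
      _ = 0 := by rw [h2t, TensorProduct.zero_tmul]
  rw [hzero, add_zero]
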